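/- Let n ≥ 2 and suppose the growth function is f(k) = n^k + 1. Then for every d ≥ 1 and μ ≥ 0, the cardinality of the nested Smolyak grid is N(d,μ) = Σ_{k=0}^{min(d,μ)} C(d,k) · (−2n)^k · (n+1)^{d−k} · Σ_{ℓ=0}^{μ−k} C(d+ℓ−1, ℓ) · n^ℓ (an identity in ℤ). -/

import Mathlib

/-- Multi-indices `i : Fin d → ℕ` with `i k ≥ 1` for all `k` and `∑ k, i k = d + μ`. -/
def smolyakIndices (d μ : ℕ) : Finset (Fin d → ℕ) :=
  (Fintype.piFinset fun _ => Finset.Icc 1 (d + μ)).filter fun i => ∑ k, i k = d + μ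

/-- The Smolyak grid `Γ(d, μ)` based on the node sets `S`. -/
noncomputable def smolyakGrid (S : ℕ → Finset ℝ) (d μ : ℕ) : Finset (Fin d → ℝ) :=
  (smolyakIndices d μ).biUnion fun i => Fintype.piFinset fun k => S (i k)

/-- `N(d, μ)`: the number of nodes in the Smolyak grid. -/
noncomputable def smolyakCard (S : ℕ → Finset ℝ) (d μ : ℕ) : ℕ :=
  (smolyakGrid S d μ).card


open PowerSeries Finset

/-- geometric series `∑ nˡ Xˡ` over `ℤ`. -/
noncomputable def smolyakGeom (n : ℕ) : PowerSeries ℤ := PowerSeries.mk fun ℓ => (n : ℤ) ^ ℓ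

/-- cardinalities of the layers, as integers. -/
def smolyakC (n : ℕ) : ℕ → ℤ := fun j => if j = 0 then (n : ℤ) + 1 else (n : ℤ) ^ j * ((n : ℤ) - 1)

lemma smolyak_hockey (e m : ℕ) :
    ∑ i ∈ range (m + 1), (e + i).choose i = (e + m + 1).choose m := by
  induction m with
  | zero => simp
  | succ m ih =>
      rw [Finset.sum_range_succ, ih,
        show e + (m + 1) + 1 = (e + m + 1) + 1 from by omega,
        Nat.choose_succ_succ,
        show e + (m + 1) = e + m + 1 from by omega]

lemma smolyak_cs (d m : ℕ) :
    ∑ i ∈ range (m + 1), (d + i - 1).choose i = (d + m).choose m := by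
  cases d with
  | zero =>
      rw [Finset.sum_eq_single 0]
      · simp
      · intro i _ hi
        have h1 : 0 + i - 1 < i := by omega
        exact Nat.choose_eq_zero_of_lt h1
      · simp
  | succ e =>
      have h : ∀ i, e + 1 + i - 1 = e + i := fun i => by omega
      simp only [h]
      rw [smolyak_hockey e m, show e + m + 1 = e + 1 + m from by omega]

lemma smolyakGeom_pow (n d : ℕ) :
    smolyakGeom n ^ d = PowerSeries.mk fun ℓ => ((d + ℓ - 1).choose ℓ : ℤ) * (n : ℤ) ^ ℓ := by
  induction d with
  | zero =>
      ext m
      rw [pow_zero, coeff_one, coeff_mk]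
      rcases m with _ | k
      · simp
      · simp [Nat.choose_eq_zero_of_lt (by omega : k + 1 - 1 < k + 1)]
  | succ d ih =>
      rw [pow_succ, ih]
      ext m
      rw [coeff_mul, coeff_mk, Finset.Nat.sum_antidiagonal_eq_sum_range_succ_mk]
      have key : ∀ i ∈ range (m + 1),
          (coeff i) (PowerSeries.mk fun ℓ => ((d + ℓ - 1).choose ℓ : ℤ) * (n : ℤ) ^ ℓ) *
            (coeff (m - i)) (smolyakGeom n)
          = ((d + i - 1).choose i : ℤ) * (n : ℤ) ^ m := by
        intro i hi
        rw [coeff_mk]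
        simp only [smolyakGeom, coeff_mk]
        rw [mul_assoc, ← pow_add]
        congr 2
        rw [Finset.mem_range] at hi; omega
      rw [Finset.sum_congr rfl key, ← Finset.sum_mul]
      have : (∑ i ∈ range (m + 1), ((d + i - 1).choose i : ℤ)) = ((d + m).choose m : ℤ) := by
        rw [← Nat.cast_sum]
        exact_mod_cast congrArg (Nat.cast : ℕ → ℤ) (smolyak_cs d m)
      rw [this, show d + 1 + m - 1 = d + m from by omega]

lemma smolyakC_eq (n : ℕ) :
    PowerSeries.mk (smolyakC n) =
      (C ((n : ℤ) + 1) - C (R := ℤ) (2 * n) * X) * smolyakGeom n := by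
  have hrw : (C ((n : ℤ) + 1) - C (R := ℤ) (2 * n) * X) * smolyakGeom n
      = C ((n : ℤ) + 1) * smolyakGeom n - (C (R := ℤ) (2 * n) * smolyakGeom n) * X ^ 1 := by
    ring
  rw [hrw]
  ext m
  rw [map_sub, coeff_C_mul, coeff_mul_X_pow', coeff_mk]
  rcases m with _ | k
  · simp [smolyakC, smolyakGeom]
  · simp only [smolyakC, smolyakGeom, coeff_mk, if_neg (Nat.succ_ne_zero k),
      if_pos (by omega : 1 ≤ k + 1), coeff_C_mul]
    have : k + 1 - 1 = k := rfl
    rw [this, pow_succ]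
    ring

lemma smolyak_partial (F : PowerSeries ℤ) (μ : ℕ) :
    (coeff μ) (smolyakGeom 1 * F) = ∑ m ∈ range (μ + 1), (coeff m) F := by
  rw [mul_comm, coeff_mul, Finset.Nat.sum_antidiagonal_eq_sum_range_succ_mk]
  apply Finset.sum_congr rfl
  intro i hi
  simp [smolyakGeom, coeff_mk]

lemma smolyak_Qcoeff (n d m : ℕ) :
    (coeff m) (smolyakGeom 1 * smolyakGeom n ^ d) =
      ∑ ℓ ∈ range (m + 1), ((d + ℓ - 1).choose ℓ : ℤ) * (n : ℤ) ^ ℓ := by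
  rw [smolyak_partial, smolyakGeom_pow]
  simp [coeff_mk]

lemma smolyak_main_alg (n d μ : ℕ) :
    (coeff μ) (smolyakGeom 1 * (PowerSeries.mk (smolyakC n)) ^ d) =
      ∑ k ∈ Finset.range (min d μ + 1),
        (d.choose k : ℤ) * (-2 * (n : ℤ)) ^ k * ((n : ℤ) + 1) ^ (d - k) *
          ∑ ℓ ∈ Finset.range (μ - k + 1), ((d + ℓ - 1).choose ℓ : ℤ) * (n : ℤ) ^ ℓ := by
  have hP : (C ((n : ℤ) + 1) - C (R := ℤ) (2 * n) * X) ^ d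
      = ∑ k ∈ range (d + 1),
          C ((d.choose k : ℤ) * (-2 * (n : ℤ)) ^ k * ((n : ℤ) + 1) ^ (d - k)) * X ^ k := by
    have h1 : C ((n : ℤ) + 1) - C (R := ℤ) (2 * (n : ℕ)) * X
        = C (-2 * (n : ℤ)) * X + C ((n : ℤ) + 1) := by
      rw [show (-2 * (n : ℤ)) = -(2 * (n : ℤ)) from by ring, map_neg]
      push_cast
      ring
    rw [h1, add_pow]
    refine Finset.sum_congr rfl fun k _ => ?_
    rw [mul_pow, ← map_pow, ← map_pow, ← map_natCast (C (R := ℤ)) (d.choose k), map_mul, map_mul]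
    ring
  have expand : smolyakGeom 1 * (PowerSeries.mk (smolyakC n)) ^ d
      = ∑ k ∈ range (d + 1),
          (C ((d.choose k : ℤ) * (-2 * (n : ℤ)) ^ k * ((n : ℤ) + 1) ^ (d - k)) *
            (smolyakGeom 1 * smolyakGeom n ^ d)) * X ^ k := by
    rw [smolyakC_eq, mul_pow, hP, Finset.sum_mul, Finset.mul_sum]
    refine Finset.sum_congr rfl fun k _ => ?_
    ring
  rw [expand, map_sum]
  have step : ∀ k ∈ range (d + 1),
      (coeff μ) ((C ((d.choose k : ℤ) * (-2 * (n : ℤ)) ^ k * ((n : ℤ) + 1) ^ (d - k)) *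
          (smolyakGeom 1 * smolyakGeom n ^ d)) * X ^ k)
      = if k ≤ μ then
          (d.choose k : ℤ) * (-2 * (n : ℤ)) ^ k * ((n : ℤ) + 1) ^ (d - k) *
            ∑ ℓ ∈ Finset.range (μ - k + 1), ((d + ℓ - 1).choose ℓ : ℤ) * (n : ℤ) ^ ℓ
        else 0 := by
    intro k _
    rw [coeff_mul_X_pow']
    split
    · rw [coeff_C_mul, smolyak_Qcoeff]
    · rfl
  rw [Finset.sum_congr rfl step, ← Finset.sum_filter]
  apply Finset.sum_congr
  · ext k
    simp only [Finset.mem_filter, Finset.mem_range]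
    omega
  · intro k _
    rfl

/-- multi-indices with given exact sum -/
def smolyakE (d m : ℕ) : Finset (Fin d → ℕ) :=
  (Fintype.piFinset fun _ => Finset.range (m + 1)).filter fun a => ∑ k, a k = m

/-- multi-indices with sum at most `μ` -/
def smolyakA (d μ : ℕ) : Finset (Fin d → ℕ) :=
  (Fintype.piFinset fun _ => Finset.range (μ + 1)).filter fun a => ∑ k, a k ≤ μ

lemma smolyak_coeff_pow (n d : ℕ) : ∀ μ : ℕ,
    (coeff μ) ((PowerSeries.mk (smolyakC n)) ^ d)
      = ∑ a ∈ smolyakE d μ, ∏ k, smolyakC n (a k) := by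
  induction d with
  | zero =>
      intro μ
      rw [pow_zero, coeff_one]
      rcases Nat.eq_zero_or_pos μ with hμ | hμ
      · subst hμ
        have hE : smolyakE 0 0 = {fun x => x.elim0} := by
          ext a
          simp only [smolyakE, Finset.mem_filter, Fintype.mem_piFinset, Finset.mem_singleton]
          constructor
          · intro _; funext x; exact x.elim0
          · intro h; subst h; simp
        rw [hE]
        simp
      · have hE : smolyakE 0 μ = ∅ := by
          ext a
          simp only [smolyakE, Finset.mem_filter, Fintype.mem_piFinset, Finset.notMem_empty,
            iff_false, not_and]
          intro _
          rw [Fin.sum_univ_zero]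
          omega
        rw [hE]
        simp
        omega
  | succ d ih =>
      intro μ
      rw [pow_succ, coeff_mul, Finset.Nat.sum_antidiagonal_eq_sum_range_succ_mk]
      simp only [coeff_mk]
      have h1 : ∀ i ∈ range (μ + 1),
          (coeff i) ((PowerSeries.mk (smolyakC n)) ^ d) * smolyakC n (μ - i)
          = ∑ b ∈ smolyakE d i, smolyakC n (μ - i) * ∏ k, smolyakC n (b k) := by
        intro i _
        rw [ih i, Finset.sum_mul]
        exact Finset.sum_congr rfl fun b _ => by ring
      rw [Finset.sum_congr rfl h1, Finset.sum_sigma']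
      refine Finset.sum_nbij' (fun p => Fin.cons (μ - p.1) p.2) (fun a => ⟨μ - a 0, Fin.tail a⟩)
        ?_ ?_ ?_ ?_ ?_
      · rintro ⟨i, b⟩ hp
        simp only [Finset.mem_sigma, Finset.mem_range, smolyakE, Finset.mem_filter,
          Fintype.mem_piFinset] at hp ⊢
        obtain ⟨hi, hb, hsum⟩ := hp
        have hsum' : ∑ k, Fin.cons (μ - i) b k = μ := by
          rw [Fin.sum_cons, hsum]; omega
        refine ⟨fun k => ?_, hsum'⟩
        have := Finset.single_le_sum (f := Fin.cons (μ - i) b)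
          (fun k _ => Nat.zero_le _) (Finset.mem_univ k)
        omega
      · intro a ha
        simp only [smolyakE, Finset.mem_filter, Fintype.mem_piFinset, Finset.mem_sigma,
          Finset.mem_range] at ha ⊢
        obtain ⟨hb, hsum⟩ := ha
        have h0 : a 0 + ∑ k, Fin.tail a k = μ := by
          simp only [Fin.tail]; rw [← Fin.sum_univ_succ]; exact hsum
        refine ⟨by omega, fun k => ?_, by omega⟩
        have := Finset.single_le_sum (f := Fin.tail a) (fun k _ => Nat.zero_le _)
          (Finset.mem_univ k)
        omega
      · rintro ⟨i, b⟩ hp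
        simp only [Finset.mem_sigma, Finset.mem_range, smolyakE, Finset.mem_filter,
          Fintype.mem_piFinset] at hp
        obtain ⟨hi, _, _⟩ := hp
        have h0 : (Fin.cons (μ - i) b : Fin (d+1) → ℕ) 0 = μ - i := Fin.cons_zero _ _
        refine Sigma.ext ?_ (heq_of_eq ?_)
        · simp [h0]; omega
        · simp [Fin.tail_cons]
      · intro a ha
        simp only [smolyakE, Finset.mem_filter, Fintype.mem_piFinset] at ha
        obtain ⟨_, hsum⟩ := ha
        have h0 : a 0 + ∑ k, Fin.tail a k = μ := by
          simp only [Fin.tail]; rw [← Fin.sum_univ_succ]; exact hsum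
        have h2 : μ - (μ - a 0) = a 0 := by omega
        show Fin.cons (μ - (μ - a 0)) (Fin.tail a) = a
        rw [h2, Fin.cons_self_tail]
      · rintro ⟨i, b⟩ hp
        simp only [Finset.mem_sigma, Finset.mem_range, smolyakE, Finset.mem_filter,
          Fintype.mem_piFinset] at hp
        show smolyakC n (μ - i) * ∏ k, smolyakC n (b k)
          = ∏ k : Fin (d + 1), smolyakC n ((Fin.cons (μ - i) b : Fin (d + 1) → ℕ) k)
        rw [Fin.prod_univ_succ]
        simp [Fin.cons_zero, Fin.cons_succ]

lemma smolyak_sum_A (n d μ : ℕ) :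
    ∑ a ∈ smolyakA d μ, ∏ k, smolyakC n (a k)
      = (coeff μ) (smolyakGeom 1 * (PowerSeries.mk (smolyakC n)) ^ d) := by
  rw [smolyak_partial]
  have hA : smolyakA d μ = (Finset.range (μ + 1)).biUnion fun m => smolyakE d m := by
    ext a
    simp only [smolyakA, smolyakE, Finset.mem_filter, Fintype.mem_piFinset, Finset.mem_biUnion,
      Finset.mem_range]
    constructor
    · rintro ⟨hb, hsum⟩
      refine ⟨∑ k, a k, by omega, fun k => ?_, rfl⟩
      have := Finset.single_le_sum (f := a) (fun k _ => Nat.zero_le _) (Finset.mem_univ k)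
      omega
    · rintro ⟨m, hm, hb, hsum⟩
      refine ⟨fun k => ?_, by omega⟩
      have := hb k
      omega
  rw [hA, Finset.sum_biUnion]
  · exact Finset.sum_congr rfl fun m _ => (smolyak_coeff_pow n d m).symm
  · intro s hs t ht hst
    refine Finset.disjoint_left.mpr fun a has hat => hst ?_
    simp only [smolyakE, Finset.mem_filter] at has hat
    omega

/-- The `j`-th layer of new points. -/
noncomputable def smolyakB (S : ℕ → Finset ℝ) : ℕ → Finset ℝ :=
  fun j => if j = 0 then S 1 else S (j + 1) \ S j

lemma smolyak_mono (S : ℕ → Finset ℝ) (hS : ∀ k, 1 ≤ k → S k ⊆ S (k + 1)) :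
    ∀ j k, 1 ≤ j → j ≤ k → S j ⊆ S k := by
  intro j k h1 hjk
  induction k, hjk using Nat.le_induction with
  | base => exact subset_rfl
  | succ k hk ih => exact ih.trans (hS k (le_trans h1 hk))

lemma smolyakB_subset (S : ℕ → Finset ℝ) (j : ℕ) : smolyakB S j ⊆ S (j + 1) := by
  unfold smolyakB
  split
  · next h => subst h; exact subset_rfl
  · exact Finset.sdiff_subset

lemma smolyakB_disjoint (S : ℕ → Finset ℝ) (hS : ∀ k, 1 ≤ k → S k ⊆ S (k + 1))
    {j k : ℕ} (hjk : j < k) : Disjoint (smolyakB S j) (smolyakB S k) := by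
  have hBk : smolyakB S k = S (k + 1) \ S k := if_neg (by omega)
  have h1 : smolyakB S j ⊆ S k :=
    (smolyakB_subset S j).trans (smolyak_mono S hS (j + 1) k (by omega) (by omega))
  rw [hBk]
  exact ((Finset.sdiff_disjoint).mono_right h1).symm

lemma smolyakB_cover (S : ℕ → Finset ℝ) (hS : ∀ k, 1 ≤ k → S k ⊆ S (k + 1)) :
    ∀ m, 1 ≤ m → ∀ x ∈ S m, ∃ j, j + 1 ≤ m ∧ x ∈ smolyakB S j := by
  intro m hm
  induction m, hm using Nat.le_induction with
  | base => exact fun x hx => ⟨0, le_refl 1, by simpa [smolyakB] using hx⟩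
  | succ m hm ih =>
      intro x hx
      by_cases h : x ∈ S m
      · obtain ⟨j, hj, hB⟩ := ih x h
        exact ⟨j, by omega, hB⟩
      · refine ⟨m, le_refl _, ?_⟩
        rw [smolyakB, if_neg (by omega)]
        exact Finset.mem_sdiff.mpr ⟨hx, h⟩

lemma smolyakB_card (n : ℕ) (hn : 2 ≤ n) (S : ℕ → Finset ℝ)
    (hS : ∀ k, 1 ≤ k → S k ⊆ S (k + 1)) (hc : ∀ k, 1 ≤ k → (S k).card = n ^ k + 1) (j : ℕ) :
    ((smolyakB S j).card : ℤ) = smolyakC n j := by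
  rcases j with _ | j
  · simp [smolyakB, smolyakC, hc 1 le_rfl]
  · have hsub : S (j + 1) ⊆ S (j + 2) := hS (j + 1) (by omega)
    have hB : smolyakB S (j + 1) = S (j + 2) \ S (j + 1) := if_neg (by omega)
    rw [hB, Finset.card_sdiff_of_subset hsub, hc (j + 2) (by omega), hc (j + 1) (by omega)]
    have hle : n ^ (j + 1) + 1 ≤ n ^ (j + 2) + 1 := by
      have := Nat.pow_le_pow_right (show 1 ≤ n by omega) (show j + 1 ≤ j + 2 by omega)
      omega
    rw [Nat.cast_sub hle]
    rw [smolyakC, if_neg (Nat.succ_ne_zero j)]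
    push_cast
    rw [pow_succ ((n : ℤ)) (j + 1)]
    ring

lemma smolyak_grid_eq (S : ℕ → Finset ℝ) (hS : ∀ k, 1 ≤ k → S k ⊆ S (k + 1))
    (d μ : ℕ) (hd : 1 ≤ d) :
    smolyakGrid S d μ
      = (smolyakA d μ).biUnion fun a => Fintype.piFinset fun k => smolyakB S (a k) := by
  ext x
  simp only [smolyakGrid, smolyakIndices, Finset.mem_biUnion, Finset.mem_filter,
    Fintype.mem_piFinset, Finset.mem_Icc, smolyakA, Finset.mem_range]
  constructor
  · rintro ⟨i, ⟨hi, hsum⟩, hx⟩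
    have hex : ∀ k, ∃ j, j + 1 ≤ i k ∧ x k ∈ smolyakB S j := fun k =>
      smolyakB_cover S hS (i k) ((hi k).1) (x k) (hx k)
    choose a ha1 ha2 using hex
    have hsum2 : ∑ k, (a k + 1) ≤ ∑ k, i k := Finset.sum_le_sum fun k _ => ha1 k
    have hsplit : ∑ k, (a k + 1) = (∑ k, a k) + d := by
      rw [Finset.sum_add_distrib, Finset.sum_const, Finset.card_univ]
      simp [Fintype.card_fin]
    have hsa : ∑ k, a k ≤ μ := by omega
    refine ⟨a, ⟨fun k => ?_, hsa⟩, ha2⟩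
    have := Finset.single_le_sum (f := a) (fun k _ => Nat.zero_le _) (Finset.mem_univ k)
    omega
  · rintro ⟨a, ⟨hak, hsa⟩, hx⟩
    have hd0 : 0 < d := hd
    set k0 : Fin d := ⟨0, hd0⟩ with hk0
    set r := μ - ∑ k, a k with hr
    set i : Fin d → ℕ := fun k => a k + 1 + if k = k0 then r else 0 with hi
    have hsum : ∑ k, i k = d + μ := by
      rw [hi]
      rw [Finset.sum_add_distrib, Finset.sum_add_distrib, Finset.sum_const, Finset.card_univ,
        Finset.sum_ite_eq' Finset.univ k0 fun _ => r]
      simp only [Finset.mem_univ, if_pos, Fintype.card_fin, smul_eq_mul, mul_one]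
      omega
    refine ⟨i, ⟨fun k => ⟨by simp only [hi]; split <;> omega, ?_⟩, hsum⟩, fun k => ?_⟩
    · have := Finset.single_le_sum (f := i) (fun k _ => Nat.zero_le _) (Finset.mem_univ k)
      omega
    · have h1 : x k ∈ smolyakB S (a k) := hx k
      have h2 : smolyakB S (a k) ⊆ S (a k + 1) := smolyakB_subset S (a k)
      have h3 : S (a k + 1) ⊆ S (i k) := by
        apply smolyak_mono S hS (a k + 1) (i k) (by omega)
        simp [hi]
      exact h3 (h2 h1)

lemma smolyak_card_eq (n : ℕ) (hn : 2 ≤ n) (S : ℕ → Finset ℝ)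
    (hS : ∀ k, 1 ≤ k → S k ⊆ S (k + 1)) (hc : ∀ k, 1 ≤ k → (S k).card = n ^ k + 1)
    (d μ : ℕ) (hd : 1 ≤ d) :
    (((smolyakGrid S d μ).card : ℤ)) = ∑ a ∈ smolyakA d μ, ∏ k, smolyakC n (a k) := by
  rw [smolyak_grid_eq S hS d μ hd, Finset.card_biUnion]
  · push_cast
    refine Finset.sum_congr rfl fun a _ => ?_
    rw [Fintype.card_piFinset]
    push_cast
    exact Finset.prod_congr rfl fun k _ => smolyakB_card n hn S hS hc (a k)
  · intro a ha b hb hab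
    have hk : ∃ k, a k ≠ b k := by
      by_contra h
      push_neg at h
      exact hab (funext h)
    obtain ⟨k, hk⟩ := hk
    refine Finset.disjoint_left.mpr fun x hxa hxb => ?_
    rw [Fintype.mem_piFinset] at hxa hxb
    rcases Nat.lt_or_ge (a k) (b k) with h | h
    · exact Finset.disjoint_left.mp (smolyakB_disjoint S hS h) (hxa k) (hxb k)
    · have h' : b k < a k := by omega
      exact Finset.disjoint_left.mp (smolyakB_disjoint S hS h') (hxb k) (hxa k)


/-- For the growth function `f(k) = nᵏ + 1` (with `n ≥ 2`), the nested Smolyak grid has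
`N(d, μ) = ∑_{k=0}^{min(d, μ)} C(d, k) (-2n)ᵏ (n+1)^(d-k) ∑_{ℓ=0}^{μ-k} C(d+ℓ-1, ℓ) nˡ`
nodes (an identity in `ℤ`). -/
theorem smolyakCard_of_pow_add_one
    (n : ℕ) (hn : 2 ≤ n)
    (S : ℕ → Finset ℝ) (hS_nested : ∀ k, 1 ≤ k → S k ⊆ S (k + 1))
    (hS_card : ∀ k, 1 ≤ k → (S k).card = n ^ k + 1)
    (d μ : ℕ) (hd : 1 ≤ d) :
    (smolyakCard S d μ : ℤ) =
      ∑ k ∈ Finset.range (min d μ + 1),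
        (d.choose k : ℤ) * (-2 * (n : ℤ)) ^ k * ((n : ℤ) + 1) ^ (d - k) *
          ∑ ℓ ∈ Finset.range (μ - k + 1), ((d + ℓ - 1).choose ℓ : ℤ) * (n : ℤ) ^ ℓ := by
  have h1 : (smolyakCard S d μ : ℤ) = ((smolyakGrid S d μ).card : ℤ) := rfl
  rw [h1, smolyak_card_eq n hn S hS_nested hS_card d μ hd, smolyak_sum_A,
    smolyak_main_alg]
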